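/- Let R be a commutative ring, M an R-module, a₁,...,a_l ∈ R, b ∈ M nonzero, and a = a₁ + ... + a_l. The following are equivalent: (1) the equation a₁m₁ + ... + a_l m_l = b is partition regular over M; (2) this equation has a constant solution m₁ = ... = m_l = m in M; (3) b ∈ aM. -/

import Mathlib

open BigOperators

/-- A matrix `A` over `S` is partition regular over the `S`-module `M` for `r` colours if
every colouring of `M` with `r` colours admits a nonzero monochromatic solution of `A m = 0`. -/
def IsPR {S : Type*} [CommRing S] {k l : ℕ} (A : Matrix (Fin k) (Fin l) S)
    (M : Type*) [AddCommGroup M] [Module S M] (r : ℕ) : Prop :=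
  ∀ χ : M → Fin r, ∃ m : Fin l → M, m ≠ 0 ∧
    (∀ i, ∑ j, A i j • m j = 0) ∧ ∀ j j', χ (m j) = χ (m j')

/-- Partition regularity for every (positive) finite number of colours. -/
def IsPRAll {S : Type*} [CommRing S] {k l : ℕ} (A : Matrix (Fin k) (Fin l) S)
    (M : Type*) [AddCommGroup M] [Module S M] : Prop :=
  ∀ r : ℕ, 1 ≤ r → IsPR A M r

theorem nonhom_single_equation {R : Type*} [CommRing R] {l : ℕ}
    (M : Type*) [AddCommGroup M] [Module R M]
    (a : Fin l → R) (b : M) (hb : b ≠ 0) :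
    ((∀ (r : ℕ), 1 ≤ r → ∀ χ : M → Fin r, ∃ m : Fin l → M,
        (∀ j j', χ (m j) = χ (m j')) ∧ ∑ i, a i • m i = b) ↔
      (∃ m : M, ∑ i, a i • m = b)) ∧
    ((∃ m : M, ∑ i, a i • m = b) ↔ (∃ m : M, (∑ i, a i) • m = b)) := by
    classical
  have key2 : (∃ m : M, ∑ i, a i • m = b) ↔ (∃ m : M, (∑ i, a i) • m = b) :=
    exists_congr fun m => by rw [Finset.sum_smul]
  refine ⟨⟨fun H => ?_, fun ⟨m, hm⟩ r hr χ => ⟨fun _ => m, fun _ _ => rfl, hm⟩⟩, key2⟩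
  by_contra hno
  rcases Nat.eq_zero_or_pos l with hl | hl
  · subst hl
    obtain ⟨m, -, hm⟩ := H 1 le_rfl (fun _ => 0)
    simp at hm
    exact hb hm.symm
  -- main case
  set A : R := ∑ i, a i with hA
  set Hgp : AddSubgroup M := (DistribMulAction.toAddMonoidHom M A).range with hHgp
  have hbH : (b : M) ∉ Hgp := by
    rintro ⟨m, hm⟩
    exact hno ⟨m, by rw [← Finset.sum_smul]; exact hm⟩
  set π := QuotientAddGroup.mk' Hgp with hπ
  have hπb : π b ≠ 0 := by
    rw [hπ, QuotientAddGroup.mk'_apply]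
    intro h
    exact hbH ((QuotientAddGroup.eq_zero_iff b).mp h)
  obtain ⟨c, hc⟩ := CharacterModule.exists_character_apply_ne_zero_of_ne_zero hπb
  set φ : M →+ AddCircle (1 : ℚ) := (show _ →+ AddCircle (1:ℚ) from c).comp π with hφ
  have hφb : φ b ≠ 0 := hc
  have hφA : ∀ m : M, φ (A • m) = 0 := by
    intro m
    have : π (A • m) = 0 := (QuotientAddGroup.eq_zero_iff _).mpr ⟨m, rfl⟩
    simp [hφ, AddMonoidHom.comp_apply, this]
    exact (congrArg c this).trans (map_zero c)
  -- the lift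
  haveI : Fact ((0:ℚ) < 1) := ⟨one_pos⟩
  set ρ : AddCircle (1:ℚ) → ℚ := fun x => (AddCircle.equivIco 1 0 x : ℚ) with hρ
  have hρ0 : ∀ x, 0 ≤ ρ x := fun x => (AddCircle.equivIco 1 0 x).2.1
  have hρ1 : ∀ x, ρ x < 1 := fun x => by
    have := (AddCircle.equivIco 1 0 x).2.2
    simpa using this
  have hρ2 : ∀ x : AddCircle (1:ℚ), ((ρ x : ℚ) : AddCircle (1:ℚ)) = x := fun x =>
    (AddCircle.equivIco 1 0).symm_apply_apply x
  set t : ℚ := ρ (φ b) with ht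
  have ht0 : 0 < t := by
    rcases (hρ0 (φ b)).lt_or_eq with h | h
    · exact h
    · exact absurd (by rw [← hρ2 (φ b), ← h]; norm_num) hφb
  have ht1 : t < 1 := hρ1 _
  set ε : ℚ := min t (1 - t) with hε
  have hε0 : 0 < ε := lt_min ht0 (by linarith)
  obtain ⟨N, hN⟩ := exists_nat_gt ((l : ℚ) / ε)
  have hl0 : (0:ℚ) < l := by exact_mod_cast hl
  have hN0 : (0:ℚ) < N := lt_trans (div_pos hl0 hε0) hN
  have hN0' : 0 < N := by exact_mod_cast hN0
  have hlN : (l : ℚ) / N < ε := by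
    rw [div_lt_iff₀ hN0]
    rw [div_lt_iff₀ hε0] at hN
    linarith [hN, mul_comm (N:ℚ) ε]
  -- the colouring
  have bucket_lt : ∀ x : M, ∀ i : Fin l, (⌊(N:ℚ) * ρ (φ (a i • x))⌋).toNat < N := by
    intro x i
    have h1 : (N:ℚ) * ρ (φ (a i • x)) < N := by
      have := hρ1 (φ (a i • x))
      nlinarith
    have h2 : ⌊(N:ℚ) * ρ (φ (a i • x))⌋ < (N:ℤ) := by
      rw [Int.floor_lt]; exact_mod_cast h1
    omega
  set χ : M → (Fin l → Fin N) := fun x i => ⟨(⌊(N:ℚ) * ρ (φ (a i • x))⌋).toNat, bucket_lt x i⟩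
    with hχ
  haveI : Nonempty (Fin l → Fin N) := ⟨fun _ => ⟨0, hN0'⟩⟩
  set e := Fintype.equivFin (Fin l → Fin N)
  obtain ⟨m, hmono, hsum⟩ := H (Fintype.card (Fin l → Fin N)) Fintype.card_pos
    (fun x => e (χ x))
  have hmono' : ∀ j j', χ (m j) = χ (m j') := fun j j' => e.injective (hmono j j')
  set j₀ : Fin l := ⟨0, hl⟩
  set d : Fin l → ℚ := fun i => ρ (φ (a i • m i)) - ρ (φ (a i • m j₀)) with hd
  have hdlt : ∀ i, |d i| < 1 / N := by
    intro i
    have hfl : ⌊(N:ℚ) * ρ (φ (a i • m i))⌋ = ⌊(N:ℚ) * ρ (φ (a i • m j₀))⌋ := by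
      have := congrFun (hmono' i j₀) i
      simp only [hχ, Fin.mk.injEq] at this
      have hn1 : 0 ≤ ⌊(N:ℚ) * ρ (φ (a i • m i))⌋ :=
        Int.floor_nonneg.mpr (mul_nonneg hN0.le (hρ0 _))
      have hn2 : 0 ≤ ⌊(N:ℚ) * ρ (φ (a i • m j₀))⌋ :=
        Int.floor_nonneg.mpr (mul_nonneg hN0.le (hρ0 _))
      omega
    have := Int.abs_sub_lt_one_of_floor_eq_floor hfl
    rw [← mul_sub, abs_mul, abs_of_nonneg hN0.le] at this
    rw [lt_div_iff₀ hN0]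
    calc |d i| * N = N * |d i| := mul_comm _ _
      _ < 1 := this
  set s : ℚ := ∑ i, d i with hs
  have hslt : |s| < ε := by
    have h1 : |s| ≤ ∑ i, |d i| := Finset.abs_sum_le_sum_abs _ _
    have h2 : ∑ i, |d i| < ∑ _i : Fin l, (1 / N : ℚ) :=
      Finset.sum_lt_sum_of_nonempty (Finset.univ_nonempty_iff.mpr ⟨j₀⟩) fun i _ => hdlt i
    have h3 : ∑ _i : Fin l, (1 / N : ℚ) = l / N := by
      simp [Finset.sum_const, Finset.card_univ]
      ring
    linarith
  -- congruence
  set P : ℚ →+ AddCircle (1:ℚ) := QuotientAddGroup.mk' (AddSubgroup.zmultiples (1:ℚ)) with hP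
  have hPcoe : ∀ q : ℚ, ((q : ℚ) : AddCircle (1:ℚ)) = P q := fun _ => rfl
  have hcong : ((t - s : ℚ) : AddCircle (1:ℚ)) = 0 := by
    have e1 : ((t : ℚ) : AddCircle (1:ℚ)) = φ b := hρ2 _
    have e2 : ((s : ℚ) : AddCircle (1:ℚ)) = ∑ i, (φ (a i • m i) - φ (a i • m j₀)) := by
      rw [hPcoe, hs, map_sum]
      refine Finset.sum_congr rfl fun i _ => ?_
      rw [hd, map_sub, ← hPcoe, ← hPcoe, hρ2, hρ2]
    have e3 : ∑ i, (φ (a i • m i) - φ (a i • m j₀)) = φ b := by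
      rw [Finset.sum_sub_distrib, ← map_sum, ← map_sum, hsum]
      have : ∑ i, a i • m j₀ = A • m j₀ := by rw [hA, Finset.sum_smul]
      rw [this, hφA, sub_zero]
    rw [hPcoe, map_sub, ← hPcoe, ← hPcoe, e1, e2, e3, sub_self]
  obtain ⟨z, hz⟩ := (AddCircle.coe_eq_zero_iff _).mp hcong
  rw [zsmul_eq_mul, mul_one] at hz
  have habs : |s| < t ∧ |s| < 1 - t := by
    constructor <;> [exact lt_of_lt_of_le hslt (min_le_left _ _);
      exact lt_of_lt_of_le hslt (min_le_right _ _)]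
  have h1 : (0:ℚ) < z := by rw [hz]; cases abs_lt.mp habs.1; linarith
  have h2 : (z:ℚ) < 1 := by rw [hz]; cases abs_lt.mp habs.2; linarith
  have h1' : 0 < z := by exact_mod_cast h1
  have h2' : z < 1 := by exact_mod_cast h2
  omega
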